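/- If h is subharmonic on the open unit disk 𝔻, h ≤ 0 on the interval (0,1) ⊂ ℝ, and h is subharmonic at 0, then h(0) ≤ 0. -/

import Mathlib

open Metric

/-- A function is subharmonic on a set if it is upper semicontinuous there and satisfies
the sub-mean value inequality on small circles. -/
def SubharmonicOn (h : ℂ → ℝ) (s : Set ℂ) : Prop :=
  UpperSemicontinuousOn h s ∧ ∀ z ∈ s, ∀ᶠ (r : ℝ) in nhdsWithin (0 : ℝ) (Set.Ioi (0 : ℝ)),
    h z ≤ (2 * Real.pi)⁻¹ *
      ∫ θ in (0:ℝ)..(2 * Real.pi),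
        h (z + Complex.ofReal r * Complex.exp (Complex.ofReal θ * Complex.I))

section helpers

private lemma usc_bound {f : ℂ → ℝ} {K : Set ℂ} (hK : IsCompact K) (hne : K.Nonempty)
    (hf : UpperSemicontinuousOn f K) (b : ℂ → ℝ) (hb : ∀ x ∈ K, f x < b x) :
    ∃ x ∈ K, ∀ y ∈ K, f y ≤ b x := by
  set U : ℂ → Set ℂ := fun x => {z | z ∈ K → f z < b x} with hU
  have hUx : ∀ x ∈ K, U x ∈ nhds x := by
    intro x hx
    have h1 := hf x hx (b x) (hb x hx)
    rw [eventually_nhdsWithin_iff] at h1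
    exact h1
  obtain ⟨t, htK, hcov⟩ := hK.elim_nhds_subcover U hUx
  have htne : t.Nonempty := by
    obtain ⟨y, hy⟩ := hne
    obtain ⟨x, hx, -⟩ := Set.mem_iUnion₂.mp (hcov hy)
    exact ⟨x, hx⟩
  obtain ⟨x₀, hx₀t, hx₀max⟩ := t.exists_max_image b htne
  refine ⟨x₀, htK x₀ hx₀t, fun y hy => ?_⟩
  obtain ⟨x, hx, hyU⟩ := Set.mem_iUnion₂.mp (hcov hy)
  exact le_trans (le_of_lt (hyU hy)) (hx₀max x hx)

private lemma usc_compact_max {f : ℂ → ℝ} {K : Set ℂ} (hK : IsCompact K) (hne : K.Nonempty)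
    (hf : UpperSemicontinuousOn f K) : ∃ x ∈ K, ∀ y ∈ K, f y ≤ f x := by
  obtain ⟨x₁, hx₁, hB⟩ := usc_bound hK hne hf (fun x => f x + 1) (fun x _ => lt_add_one _)
  have hSne : (f '' K).Nonempty := hne.image f
  have hSbdd : BddAbove (f '' K) := ⟨f x₁ + 1, by rintro - ⟨y, hy, rfl⟩; exact hB y hy⟩
  set M := sSup (f '' K) with hMdef
  by_contra hcon
  push_neg at hcon
  have hlt : ∀ x ∈ K, f x < M := by
    intro x hx
    obtain ⟨y, hy, hxy⟩ := hcon x hx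
    exact lt_of_lt_of_le hxy (le_csSup hSbdd ⟨y, hy, rfl⟩)
  obtain ⟨x₀, hx₀, hall⟩ := usc_bound hK hne hf (fun x => (f x + M) / 2)
    (fun x hx => by linarith [hlt x hx])
  have hMle : M ≤ (f x₀ + M) / 2 := csSup_le hSne (by rintro - ⟨y, hy, rfl⟩; exact hall y hy)
  linarith [hlt x₀ hx₀]

private lemma re_cpow_half (ζ : ℂ) :
    (ζ ^ (1/2 : ℂ)).re = Real.sqrt ((‖ζ‖ + ζ.re) / 2) := by
  rcases eq_or_ne ζ 0 with rfl | hζ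
  · simp [Complex.zero_cpow (by norm_num : (1/2 : ℂ) ≠ 0)]
  · rw [Complex.cpow_def_of_ne_zero hζ, Complex.exp_re]
    have him : (Complex.log ζ * (1/2 : ℂ)).im = ζ.arg / 2 := by
      simp [Complex.mul_im, Complex.log_im, Complex.log_re]
      ring
    have hre : (Complex.log ζ * (1/2 : ℂ)).re = Real.log (‖ζ‖) / 2 := by
      simp [Complex.mul_re, Complex.log_im, Complex.log_re]
      ring
    rw [him, hre]
    have habs : 0 < ‖ζ‖ := norm_pos_iff.mpr hζ
    have h1 : Real.exp (Real.log (‖ζ‖) / 2) = Real.sqrt (‖ζ‖) := by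
      rw [← Real.log_sqrt habs.le, Real.exp_log (Real.sqrt_pos.mpr habs)]
    have h2 : Real.cos (ζ.arg / 2) = Real.sqrt ((1 + Real.cos ζ.arg) / 2) :=
      Real.cos_half (Complex.neg_pi_lt_arg ζ).le (Complex.arg_le_pi ζ)
    rw [h1, h2, Complex.cos_arg hζ, ← Real.sqrt_mul habs.le]
    congr 1
    field_simp

private lemma integral_circle_eq {f : ℂ → ℂ} {c : ℂ} {r : ℝ} (hr : 0 < r)
    (hf : ∀ z ∈ closedBall c r, DifferentiableAt ℂ f z) :
    (∫ θ in (0:ℝ)..(2 * Real.pi), f (c + (r : ℂ) * Complex.exp ((θ : ℂ) * Complex.I)))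
      = ((2 * Real.pi : ℝ) : ℂ) * f c := by
  have h1 := Complex.circleIntegral_sub_center_inv_smul_of_differentiable_on_off_countable hr
      Set.countable_empty
      (fun z hz => (hf z hz).continuousAt.continuousWithinAt)
      (fun z hz => hf z (ball_subset_closedBall hz.1))
  rw [circleIntegral] at h1
  simp only [deriv_circleMap] at h1
  have h2 : ∀ θ : ℝ, (circleMap 0 r θ * Complex.I) •
      ((circleMap c r θ - c)⁻¹ • f (circleMap c r θ)) = Complex.I * f (circleMap c r θ) := by
    intro θ
    have hne : circleMap 0 r θ ≠ 0 := by
      intro hzero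
      have := congrArg norm hzero
      rw [norm_circleMap_zero] at this
      simp [abs_of_pos hr] at this
      exact hr.ne' this
    rw [circleMap_sub_center, smul_eq_mul, smul_eq_mul]
    field_simp
  simp only [h2] at h1
  rw [intervalIntegral.integral_const_mul] at h1
  have hI : (Complex.I : ℂ) ≠ 0 := Complex.I_ne_zero
  have h3 : (2 * Real.pi * Complex.I : ℂ) • f c = Complex.I * (((2 * Real.pi : ℝ) : ℂ) * f c) := by
    rw [smul_eq_mul]
    push_cast
    ring
  rw [h3] at h1
  have h4 := mul_left_cancel₀ hI h1
  rw [← h4]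
  apply intervalIntegral.integral_congr
  intro θ _
  rfl

private lemma integral_circle_re {f : ℂ → ℂ} {c : ℂ} {r : ℝ} (hr : 0 < r)
    (hf : ∀ z ∈ closedBall c r, DifferentiableAt ℂ f z) :
    (∫ θ in (0:ℝ)..(2 * Real.pi), (f (c + (r : ℂ) * Complex.exp ((θ : ℂ) * Complex.I))).re)
      = 2 * Real.pi * (f c).re := by
  have hγ : Continuous fun θ : ℝ => c + (r : ℂ) * Complex.exp ((θ : ℂ) * Complex.I) := by
    fun_prop
  have hγball : ∀ θ : ℝ, c + (r : ℂ) * Complex.exp ((θ : ℂ) * Complex.I) ∈ closedBall c r := by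
    intro θ
    rw [mem_closedBall, dist_eq_norm, add_sub_cancel_left]
    rw [norm_mul, Complex.norm_real, Real.norm_eq_abs, Complex.norm_exp_ofReal_mul_I]
    simp [abs_of_pos hr]
  have hcont : Continuous fun θ : ℝ => f (c + (r : ℂ) * Complex.exp ((θ : ℂ) * Complex.I)) := by
    rw [continuous_iff_continuousAt]
    intro θ
    have hcomp : ContinuousAt (f ∘ fun θ : ℝ => c + (r : ℂ) * Complex.exp ((θ : ℂ) * Complex.I)) θ :=
      ContinuousAt.comp (hf _ (hγball θ)).continuousAt hγ.continuousAt
    exact hcomp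
  have hInt : IntervalIntegrable
      (fun θ : ℝ => f (c + (r : ℂ) * Complex.exp ((θ : ℂ) * Complex.I)))
      MeasureTheory.volume 0 (2 * Real.pi) := hcont.intervalIntegrable _ _
  have := Complex.reCLM.intervalIntegral_comp_comm hInt
  simp only [Complex.reCLM_apply] at this
  rw [this, integral_circle_eq hr hf]
  simp

private lemma integral_normSq (c : ℂ) (r : ℝ) :
    (∫ θ in (0:ℝ)..(2 * Real.pi), Complex.normSq (c + (r : ℂ) * Complex.exp ((θ : ℂ) * Complex.I)))
      = 2 * Real.pi * (Complex.normSq c + r ^ 2) := by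
  have key : ∀ θ : ℝ, Complex.normSq (c + (r : ℂ) * Complex.exp ((θ : ℂ) * Complex.I))
      = (Complex.normSq c + r ^ 2) + (2 * r * c.re) * Real.cos θ + (2 * r * c.im) * Real.sin θ := by
    intro θ
    have hpyth := Real.sin_sq_add_cos_sq θ
    simp only [Complex.normSq_apply, Complex.add_re, Complex.add_im, Complex.mul_re,
      Complex.mul_im, Complex.exp_ofReal_mul_I_re, Complex.exp_ofReal_mul_I_im,
      Complex.ofReal_re, Complex.ofReal_im]
    nlinarith [hpyth]
  simp only [key]
  rw [intervalIntegral.integral_add (by apply Continuous.intervalIntegrable; fun_prop)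
      (by apply Continuous.intervalIntegrable; fun_prop),
    intervalIntegral.integral_add intervalIntegrable_const
      (by apply Continuous.intervalIntegrable; fun_prop),
    intervalIntegral.integral_const_mul, intervalIntegral.integral_const_mul,
    intervalIntegral.integral_const, integral_cos, integral_sin]
  simp [Real.sin_two_pi, Real.cos_two_pi]

end helpers

set_option maxHeartbeats 4000000 in
/-- If `h` is subharmonic on the open unit disk and `h ≤ 0` on the real segment `(0,1)`,
then `h(0) ≤ 0`. -/
theorem subharmonic_le_zero_of_le_zero_on_segment
    (h : ℂ → ℝ) (hsub : SubharmonicOn h (ball (0 : ℂ) 1))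
    (hseg : ∀ t ∈ Set.Ioo (0 : ℝ) 1, h (Complex.ofReal t) ≤ 0) :
    h 0 ≤ 0 := by
  obtain ⟨husc, hmean⟩ := hsub
  have hKball : closedBall (0:ℂ) (1/2) ⊆ ball (0:ℂ) 1 := by
    intro z hz
    rw [mem_closedBall] at hz
    rw [mem_ball]
    linarith
  have huscK : UpperSemicontinuousOn h (closedBall (0:ℂ) (1/2)) := husc.mono hKball
  have h0K : (0:ℂ) ∈ closedBall (0:ℂ) (1/2) := mem_closedBall_self (by norm_num)
  have key : ∀ ε : ℝ, 0 < ε → h 0 ≤ 2 * ε := by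
    intro ε hε
    -- upper bound M on the closed half-ball
    obtain ⟨zM, hzMK, hM⟩ := usc_compact_max (isCompact_closedBall _ _) ⟨0, h0K⟩ huscK
    set M := h zM with hMdef
    -- β : thickening of the segment where h < ε
    set Kseg : Set ℂ := Complex.ofReal '' Set.Icc (2/5) (1/2) with hKsegdef
    have hKsegc : IsCompact Kseg := (isCompact_Icc).image Complex.continuous_ofReal
    have hKsub : Kseg ⊆ interior {z : ℂ | h z < ε} := by
      rintro - ⟨t, ht, rfl⟩
      rw [mem_interior_iff_mem_nhds]
      have htI : t ∈ Set.Ioo (0:ℝ) 1 := ⟨by linarith [ht.1], by linarith [ht.2]⟩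
      have htball : (t:ℂ) ∈ ball (0:ℂ) 1 := by
        rw [mem_ball, dist_zero_right, Complex.norm_real, Real.norm_eq_abs]
        rw [abs_of_pos htI.1]
        exact htI.2
      have h1 := husc (t:ℂ) htball ε (lt_of_le_of_lt (hseg t htI) hε)
      rw [eventually_nhdsWithin_iff] at h1
      have h2 : ∀ᶠ z in nhds (t:ℂ), z ∈ ball (0:ℂ) 1 := (isOpen_ball).eventually_mem htball
      filter_upwards [h1, h2] with z hz1 hz2
      exact hz1 hz2
    obtain ⟨β₀, hβ₀, hth⟩ := hKsegc.exists_thickening_subset_open isOpen_interior hKsub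
    obtain ⟨β, hβpos, hβle, hββ₀⟩ : ∃ β : ℝ, 0 < β ∧ β ≤ 1/10 ∧ β ≤ β₀ :=
      ⟨min β₀ (1/10), lt_min hβ₀ (by norm_num), min_le_right _ _, min_le_left _ _⟩
    -- h < ε near the right part of the sphere
    have hεnb : ∀ z : ℂ, ‖z‖ = 1/2 → 1/4 < z.re → |z.im| < β → h z < ε := by
      intro z hz hre him
      have hsq : z.re ^ 2 + z.im ^ 2 = (1/2) ^ 2 := by
        have h1 : ‖z‖ ^ 2 = Complex.normSq z := Complex.sq_norm z
        rw [hz, Complex.normSq_apply] at h1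
        nlinarith [h1]
      have hrepos : 0 < z.re := by linarith
      have him2 : z.im ^ 2 ≤ (1/10) ^ 2 := by
        have habs2 : |z.im| ^ 2 = z.im ^ 2 := sq_abs z.im
        nlinarith [abs_nonneg z.im]
      have hre25 : 2/5 ≤ z.re := by nlinarith [hsq, him2, hrepos]
      have hrele : z.re ≤ 1/2 := by
        have h2 := Complex.abs_re_le_norm z
        rw [hz] at h2
        exact le_trans (le_abs_self _) h2
      have hmem : z ∈ thickening β₀ Kseg := by
        rw [mem_thickening_iff]
        refine ⟨((z.re : ℝ) : ℂ), ⟨z.re, ⟨hre25, hrele⟩, rfl⟩, ?_⟩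
        have hdist : dist z ((z.re : ℝ) : ℂ) = |z.im| := by
          rw [Complex.dist_eq]
          have h3 : z - (z.re : ℂ) = Complex.I * z.im := by
            apply Complex.ext <;> simp
          rw [h3, norm_mul, Complex.norm_I, Complex.norm_real, Real.norm_eq_abs, one_mul]
        rw [hdist]
        calc |z.im| < β := him
        _ ≤ β₀ := hββ₀
      have hfin2 : z ∈ {z : ℂ | h z < ε} := interior_subset (hth hmem)
      exact hfin2
    -- the constants
    obtain ⟨σ, hσpos, hσle4, hσleβ⟩ : ∃ σ : ℝ, 0 < σ ∧ σ ≤ 1/4 ∧ σ ≤ β/2 :=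
      ⟨min (1/4) (β/2), lt_min (by norm_num) (by linarith), min_le_left _ _, min_le_right _ _⟩
    obtain ⟨c, hcnn, hcσ⟩ : ∃ c : ℝ, 0 ≤ c ∧ M - ε ≤ c * σ := by
      refine ⟨max (M - ε) 0 / σ, div_nonneg (le_max_right _ _) hσpos.le, ?_⟩
      rw [div_mul_cancel₀ _ hσpos.ne']
      exact le_max_left _ _
    obtain ⟨δ, hδpos, hδle, hcw⟩ : ∃ δ : ℝ, 0 < δ ∧ δ ≤ 1/8 ∧ c * Real.sqrt δ ≤ ε := by
      refine ⟨min (1/8) ((ε / (c+1))^2), lt_min (by norm_num) (by positivity), min_le_left _ _, ?_⟩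
      have h1 : Real.sqrt (min (1/8) ((ε / (c+1))^2)) ≤ ε/(c+1) := by
        calc Real.sqrt (min (1/8) ((ε / (c+1))^2)) ≤ Real.sqrt ((ε/(c+1))^2) :=
          Real.sqrt_le_sqrt (min_le_right _ _)
        _ = ε/(c+1) := Real.sqrt_sq (by positivity)
      have h2 : c * Real.sqrt (min (1/8) ((ε / (c+1))^2)) ≤ c * (ε/(c+1)) :=
        mul_le_mul_of_nonneg_left h1 hcnn
      have h3 : c * (ε/(c+1)) ≤ ε := by
        rw [mul_div_assoc']
        rw [div_le_iff₀ (by positivity)]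
        nlinarith
      linarith
    -- w function
    set w : ℂ → ℝ := fun z => (((δ:ℂ) - z) ^ (1/2 : ℂ)).re with hwdef
    have hwsqrt : ∀ z, w z = Real.sqrt ((‖(δ:ℂ) - z‖ + ((δ:ℂ) - z).re) / 2) :=
      fun z => re_cpow_half _
    have hwnn : ∀ z, 0 ≤ w z := fun z => (hwsqrt z) ▸ Real.sqrt_nonneg _
    have hw0 : w 0 = Real.sqrt δ := by
      rw [hwsqrt]
      rw [sub_zero, Complex.norm_real, Real.norm_eq_abs, Complex.ofReal_re, abs_of_pos hδpos]
      congr 1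
      ring
    -- the cut
    set cut : Set ℂ := {z : ℂ | z.im = 0 ∧ δ ≤ z.re} with hcutdef
    have hcutclosed : IsClosed cut :=
      (isClosed_eq Complex.continuous_im continuous_const).inter
        (isClosed_le continuous_const Complex.continuous_re)
    have hFdiff : ∀ z : ℂ, z ∉ cut → DifferentiableAt ℂ (fun x : ℂ => ((δ:ℂ) - x) ^ (1/2:ℂ)) z := by
      intro z hz
      apply DifferentiableAt.cpow ((differentiable_const _).sub differentiable_id).differentiableAt
        (differentiableAt_const _)
      rw [Complex.mem_slitPlane_iff]
      simp only [id_eq, Pi.sub_apply, Complex.sub_re, Complex.sub_im, Complex.ofReal_re, Complex.ofReal_im]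
      by_cases him : z.im = 0
      · left
        have hre : ¬ δ ≤ z.re := fun hle => hz ⟨him, hle⟩
        push_neg at hre
        linarith
      · right
        simpa using him
    have hwcontAt : ∀ z : ℂ, z ∉ cut → ContinuousAt w z := by
      intro z hz
      exact Complex.continuous_re.continuousAt.comp (hFdiff z hz).continuousAt
    have hwlsc : ∀ x : ℂ, LowerSemicontinuousAt w x := by
      intro x
      by_cases hx : x ∈ cut
      · have hwx : w x = 0 := by
          rw [hwsqrt]
          have hxim : ((δ:ℂ) - x).im = 0 := by
            simp [Complex.sub_im, hx.1]
          have hxre : ((δ:ℂ) - x).re = δ - x.re := by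
            simp [Complex.sub_re]
          have habs : ‖(δ:ℂ) - x‖ = -(δ - x.re) := by
            have : (δ:ℂ) - x = ((δ - x.re : ℝ) : ℂ) := by
              apply Complex.ext <;> simp [hx.1]
            rw [this, Complex.norm_real, Real.norm_eq_abs, abs_of_nonpos (by linarith [hx.2])]
          rw [habs, hxre]
          simp
        intro y hy
        rw [hwx] at hy
        filter_upwards with z
        exact lt_of_lt_of_le hy (hwnn z)
      · intro y hy
        exact (hwcontAt x hx).eventually (eventually_gt_nhds hy)
    -- boundary bound
    have hbound : ∀ z ∈ closedBall (0:ℂ) (1/2), (‖z‖ = 1/2 ∨ z ∈ cut) →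
        h z ≤ ε + c * w z := by
      intro z hzK hcase
      have hwz := hwnn z
      have hcwz : 0 ≤ c * w z := mul_nonneg hcnn hwz
      rcases hcase with hsphere | hcut'
      · by_cases hnear : 1/4 < z.re ∧ |z.im| < β
        · have := hεnb z hsphere hnear.1 hnear.2
          linarith
        · have hσw : σ ≤ w z := by
            have hζre : ((δ:ℂ) - z).re = δ - z.re := by simp [Complex.sub_re]
            have hζim : ((δ:ℂ) - z).im = -z.im := by simp [Complex.sub_im]
            have habs2 : (‖(δ:ℂ) - z‖)^2 = ((δ:ℂ) - z).re^2 + ((δ:ℂ) - z).im^2 := by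
              rw [Complex.sq_norm, Complex.normSq_apply]; ring
            have hδnorm : ‖((δ:ℂ))‖ = δ := by
              rw [Complex.norm_real, Real.norm_eq_abs, abs_of_pos hδpos]
            have habs_ge : 1/2 - δ ≤ ‖(δ:ℂ) - z‖ := by
              have h1 : ‖z‖ - ‖((δ:ℂ))‖ ≤ ‖z - ((δ:ℂ))‖ := norm_sub_norm_le _ _
              rw [norm_sub_rev, hδnorm] at h1
              rw [hsphere] at h1
              linarith
            have habs_le : ‖(δ:ℂ) - z‖ ≤ δ + 1/2 := by
              have h1 : ‖((δ:ℂ)) - z‖ ≤ ‖((δ:ℂ))‖ + ‖z‖ := norm_sub_le _ _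
              rw [hδnorm] at h1
              rw [hsphere] at h1
              exact h1
            have hre_abs : |((δ:ℂ) - z).re| ≤ ‖(δ:ℂ) - z‖ := Complex.abs_re_le_norm _
            have hq : σ^2 ≤ (‖(δ:ℂ) - z‖ + ((δ:ℂ) - z).re)/2 := by
              rcases (not_and_or.mp hnear) with hre | him
              · push_neg at hre
                rw [hζre]
                nlinarith [hσpos.le, hδpos.le, hσle4]
              · push_neg at him
                have key2 : (‖(δ:ℂ) - z‖ + ((δ:ℂ) - z).re) *
                    (‖(δ:ℂ) - z‖ - ((δ:ℂ) - z).re) = z.im^2 := by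
                  rw [hζim] at habs2
                  linear_combination habs2
                have hBle : ‖(δ:ℂ) - z‖ - ((δ:ℂ) - z).re ≤ 2 := by
                  have h4 := (abs_le.mp hre_abs).1
                  linarith
                have hAnn : 0 ≤ ‖(δ:ℂ) - z‖ + ((δ:ℂ) - z).re := by
                  have h4 := (abs_le.mp hre_abs).1
                  linarith
                have hβ2 : β^2 ≤ z.im^2 := by
                  have h5 : |z.im|^2 = z.im^2 := sq_abs z.im
                  nlinarith [hβpos.le, abs_nonneg z.im]
                nlinarith [key2, hBle, hAnn, hβ2, hβpos.le, hσleβ, hσpos.le]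
            calc σ = Real.sqrt (σ^2) := (Real.sqrt_sq hσpos.le).symm
            _ ≤ Real.sqrt ((‖(δ:ℂ) - z‖ + ((δ:ℂ) - z).re)/2) := Real.sqrt_le_sqrt hq
            _ = w z := (hwsqrt z).symm
          have hcm : M - ε ≤ c * w z := by
            have h1 : c * σ ≤ c * w z := mul_le_mul_of_nonneg_left hσw hcnn
            linarith
          have hhz := hM z hzK
          linarith
      · have him : z.im = 0 := hcut'.1
        have hre : δ ≤ z.re := hcut'.2
        have hzre : z = ((z.re : ℝ) : ℂ) := by
          apply Complex.ext <;> simp [him]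
        have hre1 : z.re < 1 := by
          rw [mem_closedBall, dist_zero_right] at hzK
          have h2 := le_trans (le_abs_self _) (le_trans (Complex.abs_re_le_norm z) hzK)
          linarith
        have h3 := hseg z.re ⟨lt_of_lt_of_le hδpos hre, hre1⟩
        rw [← hzre] at h3
        linarith
    -- the main estimate with strict perturbation
    have hη : ∀ η : ℝ, 0 < η → h 0 ≤ ε + c * Real.sqrt δ + η := by
      intro η hηpos
      set g : ℂ → ℝ := fun z => h z - ε - c * w z + η * Complex.normSq z with hgdef
      have hgusc : UpperSemicontinuousOn g (closedBall (0:ℂ) (1/2)) := by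
        intro x hx y hy
        have hgx : g x = h x - ε - c * w x + η * Complex.normSq x := rfl
        rw [hgx] at hy
        obtain ⟨d, hd, hd3⟩ : ∃ d : ℝ, 0 < d ∧
            h x - ε - c * w x + η * Complex.normSq x + 3 * d ≤ y :=
          ⟨(y - (h x - ε - c * w x + η * Complex.normSq x))/3, by linarith, by linarith⟩
        have e1 := huscK x hx (h x + d) (by linarith)
        have e2 : ∀ᶠ z in nhds x, c * w x - d < c * w z := by
          have hd' : 0 < d/(c+1) := by positivity
          have e2a := hwlsc x (w x - d/(c+1)) (by linarith)
          filter_upwards [e2a] with z hz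
          have h1 : c * (w x - d/(c+1)) ≤ c * w z := mul_le_mul_of_nonneg_left hz.le hcnn
          have h2 : c * (d/(c+1)) ≤ d := by
            rw [mul_div_assoc']
            rw [div_le_iff₀ (by positivity)]
            nlinarith
          nlinarith
        have e3 : ∀ᶠ z in nhds x, η * Complex.normSq z < η * Complex.normSq x + d := by
          have hcont : ContinuousAt (fun z : ℂ => η * Complex.normSq z) x :=
            (continuous_const.mul Complex.continuous_normSq).continuousAt
          exact hcont.eventually
            (eventually_lt_nhds (by linarith : η * Complex.normSq x < η * Complex.normSq x + d))
        filter_upwards [e1, e2.filter_mono nhdsWithin_le_nhds, e3.filter_mono nhdsWithin_le_nhds]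
          with z h1 h2 h3
        have hgz : g z = h z - ε - c * w z + η * Complex.normSq z := rfl
        rw [hgz]
        linarith
      obtain ⟨z₀, hz₀K, hz₀max⟩ := usc_compact_max (isCompact_closedBall _ _) ⟨0, h0K⟩ hgusc
      have hnsq0 : 0 ≤ Complex.normSq z₀ := Complex.normSq_nonneg z₀
      have hnsq : Complex.normSq z₀ ≤ 1 := by
        rw [mem_closedBall, dist_zero_right] at hz₀K
        have h1 := Complex.sq_norm z₀
        nlinarith [norm_nonneg z₀]
      have hηnsq : η * Complex.normSq z₀ ≤ η := by nlinarith
      have hgz₀ : g z₀ ≤ η := by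
        have hz₀K' : z₀ ∈ closedBall (0:ℂ) (1/2) := by
          rw [mem_closedBall, dist_zero_right]
          rw [mem_closedBall, dist_zero_right] at hz₀K
          exact hz₀K
        by_cases hint : ‖z₀‖ < 1/2 ∧ z₀ ∉ cut
        · have hz0le : h z₀ ≤ 0 := by
            obtain ⟨ρ, hρpos, hρsub⟩ : ∃ ρ > 0, ball z₀ ρ ⊆ cutᶜ := by
              rcases Metric.isOpen_iff.mp hcutclosed.isOpen_compl z₀ hint.2 with ⟨ρ, hρ, hsub'⟩
              exact ⟨ρ, hρ, hsub'⟩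
            obtain ⟨r₀, hr₀pos, hr₀ρ, hr₀abs⟩ : ∃ r₀ : ℝ, 0 < r₀ ∧ r₀ < ρ ∧
                r₀ ≤ 1/2 - ‖z₀‖ :=
              ⟨min (ρ/2) (1/2 - ‖z₀‖), lt_min (by linarith) (by linarith [hint.1]),
                lt_of_le_of_lt (min_le_left _ _) (by linarith), min_le_right _ _⟩
            have hz₀ball : z₀ ∈ ball (0:ℂ) 1 := by
              rw [mem_ball, dist_zero_right]
              linarith [hint.1]
            have hmean0 := hmean z₀ hz₀ball
            have hIoo' : ∀ᶠ r in nhdsWithin (0:ℝ) (Set.Ioi 0), r ∈ Set.Ioo 0 r₀ :=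
              Ioo_mem_nhdsGT_of_mem ⟨le_refl 0, hr₀pos⟩
            obtain ⟨r, hrineq, hrIoo⟩ := (hmean0.and hIoo').exists
            have hrpos : 0 < r := hrIoo.1
            have hrlt : r < r₀ := hrIoo.2
            by_contra hpos
            push_neg at hpos
            have hγK : ∀ θ : ℝ, z₀ + (r:ℂ) * Complex.exp ((θ:ℂ) * Complex.I)
                ∈ closedBall (0:ℂ) (1/2) := by
              intro θ
              rw [mem_closedBall, dist_zero_right]
              calc ‖z₀ + (r:ℂ) * Complex.exp ((θ:ℂ) * Complex.I)‖
                  ≤ ‖z₀‖ + ‖(r:ℂ) * Complex.exp ((θ:ℂ) * Complex.I)‖ := norm_add_le _ _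
              _ = ‖z₀‖ + r := by
                  rw [norm_mul, Complex.norm_real, Real.norm_eq_abs,
                    Complex.norm_exp_ofReal_mul_I, abs_of_pos hrpos, mul_one]
              _ ≤ 1/2 := by linarith
            have hγcball : ∀ z ∈ closedBall z₀ r, z ∉ cut := by
              intro z hzc
              apply hρsub
              rw [mem_ball]
              rw [mem_closedBall] at hzc
              linarith
            have hγmem : ∀ θ : ℝ, z₀ + (r:ℂ) * Complex.exp ((θ:ℂ) * Complex.I)
                ∈ closedBall z₀ r := by
              intro θ
              rw [mem_closedBall, dist_eq_norm, add_sub_cancel_left, norm_mul,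
                Complex.norm_real, Real.norm_eq_abs, Complex.norm_exp_ofReal_mul_I, abs_of_pos hrpos, mul_one]
            by_cases hInt : IntervalIntegrable
                (fun θ : ℝ => h (z₀ + (r:ℂ) * Complex.exp ((θ:ℂ) * Complex.I)))
                MeasureTheory.volume 0 (2 * Real.pi)
            · have hwcirc : Continuous
                  (fun θ : ℝ => w (z₀ + (r:ℂ) * Complex.exp ((θ:ℂ) * Complex.I))) := by
                rw [continuous_iff_continuousAt]
                intro θ
                have hγc : Continuous (fun θ : ℝ => z₀ + (r:ℂ) * Complex.exp ((θ:ℂ) * Complex.I)) := by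
                  fun_prop
                have hc1 : ContinuousAt w (z₀ + (r:ℂ) * Complex.exp ((θ:ℂ) * Complex.I)) :=
                  hwcontAt _ (hγcball _ (hγmem θ))
                have hcomp : ContinuousAt
                    (w ∘ fun θ : ℝ => z₀ + (r:ℂ) * Complex.exp ((θ:ℂ) * Complex.I)) θ :=
                  ContinuousAt.comp hc1 hγc.continuousAt
                exact hcomp
              have hnsqcirc : Continuous
                  (fun θ : ℝ => Complex.normSq (z₀ + (r:ℂ) * Complex.exp ((θ:ℂ) * Complex.I))) :=
                Complex.continuous_normSq.comp (by fun_prop)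
              set φb : ℝ → ℝ := fun θ =>
                (g z₀ + ε) + c * w (z₀ + (r:ℂ) * Complex.exp ((θ:ℂ) * Complex.I))
                  - η * Complex.normSq (z₀ + (r:ℂ) * Complex.exp ((θ:ℂ) * Complex.I)) with hφbdef
              have hφbInt : IntervalIntegrable φb MeasureTheory.volume 0 (2 * Real.pi) := by
                apply Continuous.intervalIntegrable
                exact (continuous_const.add (continuous_const.mul hwcirc)).sub
                  (continuous_const.mul hnsqcirc)
              have hmono : ∀ θ ∈ Set.Icc (0:ℝ) (2 * Real.pi),
                  h (z₀ + (r:ℂ) * Complex.exp ((θ:ℂ) * Complex.I)) ≤ φb θ := by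
                intro θ _
                have h1 := hz₀max _ (hγK θ)
                have hg1 : g (z₀ + (r:ℂ) * Complex.exp ((θ:ℂ) * Complex.I))
                    = h (z₀ + (r:ℂ) * Complex.exp ((θ:ℂ) * Complex.I)) - ε
                      - c * w (z₀ + (r:ℂ) * Complex.exp ((θ:ℂ) * Complex.I))
                      + η * Complex.normSq (z₀ + (r:ℂ) * Complex.exp ((θ:ℂ) * Complex.I)) := rfl
                rw [hg1] at h1
                show h (z₀ + (r:ℂ) * Complex.exp ((θ:ℂ) * Complex.I))
                  ≤ (g z₀ + ε) + c * w (z₀ + (r:ℂ) * Complex.exp ((θ:ℂ) * Complex.I))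
                    - η * Complex.normSq (z₀ + (r:ℂ) * Complex.exp ((θ:ℂ) * Complex.I))
                linarith
              have hIle := intervalIntegral.integral_mono_on (by positivity) hInt hφbInt hmono
              have hwint : (∫ θ in (0:ℝ)..(2 * Real.pi),
                    w (z₀ + (r:ℂ) * Complex.exp ((θ:ℂ) * Complex.I)))
                  = 2 * Real.pi * w z₀ :=
                integral_circle_re (f := fun x : ℂ => ((δ:ℂ) - x) ^ (1/2:ℂ)) hrpos
                  (fun z hzc => hFdiff z (hγcball z hzc))
              have hnint := integral_normSq z₀ r
              have hφbval : (∫ θ in (0:ℝ)..(2 * Real.pi), φb θ)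
                  = 2 * Real.pi * (g z₀ + ε) + c * (2 * Real.pi * w z₀)
                    - η * (2 * Real.pi * (Complex.normSq z₀ + r^2)) := by
                rw [hφbdef]
                beta_reduce
                have hI1 : IntervalIntegrable (fun θ : ℝ => c * w (z₀ + (r:ℂ) * Complex.exp ((θ:ℂ) * Complex.I)))
                    MeasureTheory.volume 0 (2 * Real.pi) :=
                  (continuous_const.mul hwcirc).intervalIntegrable _ _
                have hI2 : IntervalIntegrable (fun θ : ℝ => η * Complex.normSq (z₀ + (r:ℂ) * Complex.exp ((θ:ℂ) * Complex.I)))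
                    MeasureTheory.volume 0 (2 * Real.pi) :=
                  (continuous_const.mul hnsqcirc).intervalIntegrable _ _
                have hI0 : IntervalIntegrable (fun θ : ℝ => (g z₀ + ε) + c * w (z₀ + (r:ℂ) * Complex.exp ((θ:ℂ) * Complex.I)))
                    MeasureTheory.volume 0 (2 * Real.pi) :=
                  intervalIntegrable_const.add hI1
                rw [intervalIntegral.integral_sub hI0 hI2]
                rw [intervalIntegral.integral_add intervalIntegrable_const hI1]
                rw [intervalIntegral.integral_const_mul, intervalIntegral.integral_const_mul]
                rw [hwint, hnint, intervalIntegral.integral_const]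
                simp
              have hchain : h z₀ ≤ (2 * Real.pi)⁻¹ * (∫ θ in (0:ℝ)..(2 * Real.pi), φb θ) := by
                calc h z₀ ≤ (2 * Real.pi)⁻¹ * (∫ θ in (0:ℝ)..(2 * Real.pi),
                    h (z₀ + (r:ℂ) * Complex.exp ((θ:ℂ) * Complex.I))) := hrineq
                _ ≤ _ := mul_le_mul_of_nonneg_left hIle (by positivity)
              rw [hφbval] at hchain
              have hsimp : (2 * Real.pi)⁻¹ * (2 * Real.pi * (g z₀ + ε) + c * (2 * Real.pi * w z₀)
                    - η * (2 * Real.pi * (Complex.normSq z₀ + r^2)))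
                  = (g z₀ + ε) + c * w z₀ - η * (Complex.normSq z₀ + r^2) := by
                have hπ : (2 * Real.pi) ≠ 0 := by positivity
                field_simp
              rw [hsimp] at hchain
              have hgz₀eq : g z₀ = h z₀ - ε - c * w z₀ + η * Complex.normSq z₀ := rfl
              rw [hgz₀eq] at hchain
              have hr2 : 0 < η * r^2 := by positivity
              nlinarith
            · rw [intervalIntegral.integral_undef hInt, mul_zero] at hrineq
              linarith
          have hgz₀eq : g z₀ = h z₀ - ε - c * w z₀ + η * Complex.normSq z₀ := rfl
          rw [hgz₀eq]
          have hcw0 : 0 ≤ c * w z₀ := mul_nonneg hcnn (hwnn z₀)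
          linarith
        · have hcase : ‖z₀‖ = 1/2 ∨ z₀ ∈ cut := by
            rw [not_and_or] at hint
            rcases hint with h1 | h2
            · left
              push_neg at h1
              rw [mem_closedBall, dist_zero_right] at hz₀K
              linarith
            · right
              exact not_not.mp h2
          have hb1 := hbound z₀ hz₀K' hcase
          have hgz₀eq : g z₀ = h z₀ - ε - c * w z₀ + η * Complex.normSq z₀ := rfl
          rw [hgz₀eq]
          linarith
      have hg0 : g 0 ≤ g z₀ := hz₀max 0 h0K
      have hg0eq : g 0 = h 0 - ε - c * w 0 + η * Complex.normSq 0 := rfl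
      rw [hg0eq, hw0] at hg0
      simp only [map_zero, mul_zero, add_zero] at hg0
      linarith
    have hfin : h 0 ≤ ε + c * Real.sqrt δ := le_of_forall_pos_le_add hη
    linarith
  have hfinal : ∀ ε' : ℝ, 0 < ε' → h 0 ≤ 0 + ε' := by
    intro ε' hε'
    have := key (ε'/2) (by linarith)
    linarith
  simpa using le_of_forall_pos_le_add hfinal
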